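/- arXiv:1007.2673 — 9 statements merged into one kernel-verified Lean document; each statement's English description precedes it below -/
import Mathlib

section
/- Let V have decidable equality. Let f : Fin k → Finset (Multiset V) give k nonempty clauses of terms (each term a multiset over V), and let G : Fin m → Finset V give m nonempty clauses of single variables. The product polynomial (∏_i f i) · (∏_j G j) has a multilinear monomial in its sum-product expansion — i.e., there exist h : Fin k → Multiset V with h i ∈ f i for all i and g : Fin m → V with g j ∈ G j for all j such that the multiset (∑_i h i) + (∑_j {g j}) has every multiplicity at most 1 — if and only if there exists h : Fin k → Multiset V with h i ∈ f i for all i such that ψ := ∑_i h i has every multiplicity at most 1, every purged clause G j \ ψ.toFinset is nonempty, and there is an injective g : Fin m → V with g j ∈ G j \ ψ.toFinset for all j. -/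
/-- Purging correctness for ΠΣΠ × ΠΣ polynomials (Theorem 3 of the
paper).  The product of a ΠΣΠ polynomial `f` (clauses of terms, each term a
multiset of variables) and a ΠΣ polynomial `G` (clauses of single variables)
has a multilinear monomial iff some choice of terms `h` from `f` is itself
multilinear, all purged clauses `G j \ ψ.toFinset` are nonempty, and the purged
ΠΣ polynomial has an injective choice. -/
theorem piSigmaPi_times_piSigma_multilinear_iff_purged
    {V : Type*} [DecidableEq V] {k m : ℕ}
    (f : Fin k → Finset (Multiset V)) (hf : ∀ i, (f i).Nonempty)
    (G : Fin m → Finset V) (hG : ∀ j, (G j).Nonempty) :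
    (∃ (h : Fin k → Multiset V) (g : Fin m → V),
      (∀ i, h i ∈ f i) ∧ (∀ j, g j ∈ G j) ∧
      ∀ v : V, ((∑ i, h i) + ∑ j, ({g j} : Multiset V)).count v ≤ 1) ↔
    (∃ h : Fin k → Multiset V, (∀ i, h i ∈ f i) ∧
      (∀ v : V, (∑ i, h i).count v ≤ 1) ∧
      (∀ j, (G j \ (∑ i, h i).toFinset).Nonempty) ∧
      ∃ g : Fin m → V, Function.Injective g ∧
        ∀ j, g j ∈ G j \ (∑ i, h i).toFinset) := by
  constructor
  · rintro ⟨h, g, hh, hg, hcount⟩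
    have key : ∀ v, (∑ i, (h i).count v) + ∑ j, (({g j} : Multiset V)).count v ≤ 1 := by
      intro v
      have := hcount v
      rwa [Multiset.count_add, Multiset.count_sum', Multiset.count_sum'] at this
    have hψ : ∀ v, (∑ i, h i).count v ≤ 1 := by
      intro v
      rw [Multiset.count_sum']
      exact le_trans (Nat.le_add_right _ _) (key v)
    have hnot : ∀ j, g j ∉ (∑ i, h i).toFinset := by
      intro j hj
      have h1 : 1 ≤ (∑ i, h i).count (g j) :=
        Multiset.one_le_count_iff_mem.mpr (Multiset.mem_toFinset.mp hj)
      rw [Multiset.count_sum'] at h1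
      have h2 : 1 ≤ ∑ j', (({g j'} : Multiset V)).count (g j) := by
        have := Finset.single_le_sum
          (f := fun j' => (({g j'} : Multiset V)).count (g j))
          (fun _ _ => Nat.zero_le _) (Finset.mem_univ j)
        simpa using this
      have := key (g j)
      omega
    have hinj : Function.Injective g := by
      intro a b hab
      by_contra hne
      have h2 : 2 ≤ ∑ j', (({g j'} : Multiset V)).count (g a) := by
        have hsub : ({a, b} : Finset (Fin m)) ⊆ Finset.univ := Finset.subset_univ _
        have := Finset.sum_le_sum_of_subset
          (f := fun j' => (({g j'} : Multiset V)).count (g a)) hsub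
        rw [Finset.sum_pair hne] at this
        simpa [hab] using this
      have := key (g a)
      omega
    refine ⟨h, hh, hψ, ?_, g, hinj, fun j => Finset.mem_sdiff.mpr ⟨hg j, hnot j⟩⟩
    intro j
    exact ⟨g j, Finset.mem_sdiff.mpr ⟨hg j, hnot j⟩⟩
  · rintro ⟨h, hh, hψ, -, g, hginj, hg⟩
    have hg' : ∀ j, g j ∈ G j ∧ g j ∉ (∑ i, h i).toFinset :=
      fun j => Finset.mem_sdiff.mp (hg j)
    refine ⟨h, g, hh, fun j => (hg' j).1, ?_⟩
    intro v
    have hψv := hψ v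
    rw [Multiset.count_add, Multiset.count_sum', Multiset.count_sum']
    rw [Multiset.count_sum'] at hψv
    simp only [Multiset.count_singleton]
    rw [← Finset.card_filter]
    by_cases hv : ∃ j, v = g j
    · obtain ⟨j, rfl⟩ := hv
      have h0 : (∑ i, h i).count (g j) = 0 :=
        Multiset.count_eq_zero.mpr (fun hm => (hg' j).2 (Multiset.mem_toFinset.mpr hm))
      rw [Multiset.count_sum'] at h0
      have hcard : (Finset.univ.filter (fun j' => g j = g j')).card ≤ 1 := by
        refine Finset.card_le_one.mpr fun a ha b hb => ?_
        simp only [Finset.mem_filter] at ha hb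
        exact hginj (ha.2.symm.trans hb.2)
      omega
    · have hcard : (Finset.univ.filter (fun j' => v = g j')).card = 0 := by
        rw [Finset.card_eq_zero]
        ext a
        simp only [Finset.mem_filter, Finset.mem_univ, true_and, Finset.notMem_empty,
          iff_false]
        exact fun ha => hv ⟨a, ha⟩
      omega
end

section
/- Let V have decidable equality, let ι be a finite index type, and let f : ι → Finset (Multiset V) give nonempty clauses of terms. Suppose ι is partitioned into sets A and B, and there is a partial selection π assigning to each a ∈ A a term π a ∈ f a such that the multiset ∑_{a ∈ A} π a has every multiplicity at most 1 and no variable occurring in ∑_{a ∈ A} π a occurs in any term of any clause f b with b ∈ B. Then the full polynomial ∏_{i ∈ ι} f i has a multilinear monomial in its sum-product expansion if and only if the subproduct ∏_{b ∈ B} f b has a multilinear monomial in its sum-product expansion. -/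
/-- The purging invariant of Theorem 4.  If the index set of a
ΠΣΠ polynomial is partitioned into `A` and `B`, and on `A` there is a partial
selection `π` of one term per clause whose multiset sum is multilinear and
shares no variable with any term of any clause indexed by `B`, then the whole
polynomial has a multilinear monomial iff the subproduct over `B` does. -/
theorem purging_invariant {V ι : Type*} [DecidableEq V] [Fintype ι] [DecidableEq ι]
    (f : ι → Finset (Multiset V)) (hf : ∀ i, (f i).Nonempty)
    (A B : Finset ι) (hcover : A ∪ B = Finset.univ) (hdisj : Disjoint A B)
    (π : ι → Multiset V) (hπ : ∀ a ∈ A, π a ∈ f a)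
    (hml : ∀ v : V, (∑ a ∈ A, π a).count v ≤ 1)
    (hsep : ∀ v : V, v ∈ (∑ a ∈ A, π a) → ∀ b ∈ B, ∀ t ∈ f b, v ∉ t) :
    (∃ h : ι → Multiset V, (∀ i, h i ∈ f i) ∧
      ∀ v : V, (∑ i, h i).count v ≤ 1) ↔
    (∃ h : ι → Multiset V, (∀ b ∈ B, h b ∈ f b) ∧
      ∀ v : V, (∑ b ∈ B, h b).count v ≤ 1) := by
  have hsplit : ∀ g : ι → Multiset V, (∑ i, g i) = (∑ a ∈ A, g a) + (∑ b ∈ B, g b) := by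
    intro g
    rw [← Finset.sum_union hdisj, hcover]
  constructor
  · rintro ⟨h, hh, hc⟩
    refine ⟨h, fun b _ => hh b, fun v => ?_⟩
    have := hc v
    rw [hsplit h, Multiset.count_add] at this
    omega
  · rintro ⟨h, hh, hc⟩
    refine ⟨fun i => if i ∈ A then π i else h i, fun i => ?_, fun v => ?_⟩
    · by_cases hi : i ∈ A
      · simpa [hi] using hπ i hi
      · have hiB : i ∈ B := by
          have : i ∈ A ∪ B := hcover ▸ Finset.mem_univ i
          simp only [Finset.mem_union] at this
          tauto
        simpa [hi] using hh i hiB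
    · rw [hsplit, Multiset.count_add]
      have e1 : (∑ a ∈ A, if a ∈ A then π a else h a) = ∑ a ∈ A, π a :=
        Finset.sum_congr rfl fun a ha => by simp [ha]
      have e2 : (∑ b ∈ B, if b ∈ A then π b else h b) = ∑ b ∈ B, h b :=
        Finset.sum_congr rfl fun b hb => by
          have : b ∉ A := fun hbA => (Finset.disjoint_left.mp hdisj hbA hb).elim
          simp [this]
      rw [e1, e2]
      by_cases hv : v ∈ (∑ a ∈ A, π a)
      · have hzero : (∑ b ∈ B, h b).count v = 0 := by
          rw [Multiset.count_eq_zero]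
          intro hmem
          obtain ⟨b, hb, hvb⟩ := Multiset.mem_sum.mp hmem
          exact hsep v hv b hb (h b) (hh b hb) hvb
        have := hml v
        omega
      · have hzero : (∑ a ∈ A, π a).count v = 0 := Multiset.count_eq_zero.mpr hv
        have := hc v
        omega
end

section
/- Let V have decidable equality and let T : Fin m → Fin 3 → Multiset V give the terms of a ΠΣ3Π polynomial f with m clauses (clause i has the three terms T i 0, T i 1, T i 2). Work over the extended variable type W := V ⊕ (Fin m × Fin 4), writing u i := Sum.inr (i,0), v i := Sum.inr (i,1), w i := Sum.inr (i,2), z i := Sum.inr (i,3). Define the polynomial p(f) over W with 4m clauses: for each i ∈ Fin m, the two-term clauses {(T i 0).map Sum.inl + {u i}, {v i}}, {(T i 1).map Sum.inl + {u i}, {w i}}, {(T i 2).map Sum.inl + {u i}, {z i}}, and the three-term clause {{v i}, {w i}, {z i}}. Then f has a multilinear monomial in its sum-product expansion (i.e., there exists g : Fin m → Fin 3 such that the multiset ∑_i T i (g i) has every multiplicity at most 1) if and only if p(f) has a multilinear monomial in its sum-product expansion. -/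
def gadgetClauses {V : Type*} [DecidableEq V] {m : ℕ}
    (T : Fin m → Fin 3 → Multiset V) (i : Fin m) :
    Fin 4 → Finset (Multiset (V ⊕ (Fin m × Fin 4))) :=
  ![{(T i 0).map Sum.inl + {Sum.inr (i, 0)}, {Sum.inr (i, 1)}},
    {(T i 1).map Sum.inl + {Sum.inr (i, 0)}, {Sum.inr (i, 2)}},
    {(T i 2).map Sum.inl + {Sum.inr (i, 0)}, {Sum.inr (i, 3)}},
    {{Sum.inr (i, 1)}, {Sum.inr (i, 2)}, {Sum.inr (i, 3)}}]

def gadgetFwd {V : Type*} [DecidableEq V] {m : ℕ}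
    (T : Fin m → Fin 3 → Multiset V) (g : Fin m → Fin 3) (i : Fin m) (j : Fin 4) :
    Multiset (V ⊕ (Fin m × Fin 4)) :=
  ![![(T i 0).map Sum.inl + {Sum.inr (i, 0)}, {Sum.inr (i, 2)}, {Sum.inr (i, 3)}, {Sum.inr (i, 1)}],
    ![{Sum.inr (i, 1)}, (T i 1).map Sum.inl + {Sum.inr (i, 0)}, {Sum.inr (i, 3)}, {Sum.inr (i, 2)}],
    ![{Sum.inr (i, 1)}, {Sum.inr (i, 2)}, (T i 2).map Sum.inl + {Sum.inr (i, 0)}, {Sum.inr (i, 3)}]]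
    (g i) j

lemma gadgetFwd_mem {V : Type*} [DecidableEq V] {m : ℕ}
    (T : Fin m → Fin 3 → Multiset V) (g : Fin m → Fin 3) (i : Fin m) (j : Fin 4) :
    gadgetFwd T g i j ∈ gadgetClauses T i j := by
  obtain ⟨k, hk⟩ : ∃ k, g i = k := ⟨_, rfl⟩
  have hu : gadgetFwd T g i j =
    ![![(T i 0).map Sum.inl + {Sum.inr (i, 0)}, {Sum.inr (i, 2)}, {Sum.inr (i, 3)}, {Sum.inr (i, 1)}],
      ![{Sum.inr (i, 1)}, (T i 1).map Sum.inl + {Sum.inr (i, 0)}, {Sum.inr (i, 3)}, {Sum.inr (i, 2)}],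
      ![{Sum.inr (i, 1)}, {Sum.inr (i, 2)}, (T i 2).map Sum.inl + {Sum.inr (i, 0)}, {Sum.inr (i, 3)}]]
      k j := by rw [gadgetFwd, hk]
  rw [hu]
  fin_cases k <;> fin_cases j <;>
    first
      | exact Finset.mem_insert_self _ _
      | exact Finset.mem_insert_of_mem (Finset.mem_insert_self _ _)
      | exact Finset.mem_insert_of_mem (Finset.mem_singleton_self _)
      | exact Finset.mem_insert_of_mem (Finset.mem_insert_of_mem (Finset.mem_singleton_self _))

lemma gadgetFwd_sum {V : Type*} [DecidableEq V] {m : ℕ}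
    (T : Fin m → Fin 3 → Multiset V) (g : Fin m → Fin 3) (i : Fin m) :
    ∑ j : Fin 4, gadgetFwd T g i j
      = (T i (g i)).map Sum.inl +
        {Sum.inr (i, 0), Sum.inr (i, 1), Sum.inr (i, 2), Sum.inr (i, 3)} := by
  obtain ⟨k, hk⟩ : ∃ k, g i = k := ⟨_, rfl⟩
  have hu : ∀ j, gadgetFwd T g i j =
    ![![(T i 0).map Sum.inl + {Sum.inr (i, 0)}, {Sum.inr (i, 2)}, {Sum.inr (i, 3)}, {Sum.inr (i, 1)}],
      ![{Sum.inr (i, 1)}, (T i 1).map Sum.inl + {Sum.inr (i, 0)}, {Sum.inr (i, 3)}, {Sum.inr (i, 2)}],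
      ![{Sum.inr (i, 1)}, {Sum.inr (i, 2)}, (T i 2).map Sum.inl + {Sum.inr (i, 0)}, {Sum.inr (i, 3)}]]
      k j := fun j => by rw [gadgetFwd, hk]
  rw [Fin.sum_univ_four, hu, hu, hu, hu, hk]
  fin_cases k
  · show (T i 0).map Sum.inl + {Sum.inr (i, 0)} + {Sum.inr (i, 2)} + {Sum.inr (i, 3)}
        + {Sum.inr (i, 1)} = (T i 0).map Sum.inl +
        {Sum.inr (i, 0), Sum.inr (i, 1), Sum.inr (i, 2), Sum.inr (i, 3)}
    simp only [Multiset.insert_eq_cons, ← Multiset.singleton_add]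
    abel
  · show {Sum.inr (i, 1)} + ((T i 1).map Sum.inl + {Sum.inr (i, 0)}) + {Sum.inr (i, 3)}
        + {Sum.inr (i, 2)} = (T i 1).map Sum.inl +
        {Sum.inr (i, 0), Sum.inr (i, 1), Sum.inr (i, 2), Sum.inr (i, 3)}
    simp only [Multiset.insert_eq_cons, ← Multiset.singleton_add]
    abel
  · show {Sum.inr (i, 1)} + {Sum.inr (i, 2)} + ((T i 2).map Sum.inl + {Sum.inr (i, 0)})
        + {Sum.inr (i, 3)} = (T i 2).map Sum.inl +
        {Sum.inr (i, 0), Sum.inr (i, 1), Sum.inr (i, 2), Sum.inr (i, 3)}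
    simp only [Multiset.insert_eq_cons, ← Multiset.singleton_add]
    abel

/-- Reduction correctness of Theorem 5.  A ΠΣ3Π polynomial with
terms `T` has a multilinear monomial iff the polynomial `p(f)` with the `4 m`
gadget clauses `gadgetClauses T` has a multilinear monomial. -/
theorem piSigma3Pi_multilinear_iff_gadget {V : Type*} [DecidableEq V] {m : ℕ}
    (T : Fin m → Fin 3 → Multiset V) :
    (∃ g : Fin m → Fin 3, ∀ x : V, (∑ i, T i (g i)).count x ≤ 1) ↔
    (∃ h : Fin m × Fin 4 → Multiset (V ⊕ (Fin m × Fin 4)),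
      (∀ c : Fin m × Fin 4, h c ∈ gadgetClauses T c.1 c.2) ∧
      ∀ x : V ⊕ (Fin m × Fin 4), (∑ c : Fin m × Fin 4, h c).count x ≤ 1) := by
  constructor
  · rintro ⟨g, hg⟩
    refine ⟨fun c => gadgetFwd T g c.1 c.2, fun c => gadgetFwd_mem T g c.1 c.2, ?_⟩
    intro x
    have hsum : (∑ c : Fin m × Fin 4, gadgetFwd T g c.1 c.2)
        = ∑ i : Fin m, ((T i (g i)).map Sum.inl +
            {Sum.inr (i, 0), Sum.inr (i, 1), Sum.inr (i, 2), Sum.inr (i, 3)}) := by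
      rw [Fintype.sum_prod_type]
      exact Finset.sum_congr rfl fun i _ => gadgetFwd_sum T g i
    rw [hsum, Multiset.count_sum']
    match x with
    | Sum.inl a =>
      have key : ∀ i : Fin m,
          (((T i (g i)).map Sum.inl +
            ({Sum.inr (i, 0), Sum.inr (i, 1), Sum.inr (i, 2), Sum.inr (i, 3)} :
              Multiset (V ⊕ (Fin m × Fin 4)))).count (Sum.inl a))
            = (T i (g i)).count a := by
        intro i
        rw [Multiset.count_add,
          Multiset.count_map_eq_count' _ _ Sum.inl_injective]
        simp
      rw [Finset.sum_congr rfl fun i _ => key i]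
      simpa [Multiset.count_sum'] using hg a
    | Sum.inr c =>
      obtain ⟨i', k⟩ := c
      have key : ∀ i : Fin m,
          (((T i (g i)).map Sum.inl +
            ({Sum.inr (i, 0), Sum.inr (i, 1), Sum.inr (i, 2), Sum.inr (i, 3)} :
              Multiset (V ⊕ (Fin m × Fin 4)))).count (Sum.inr (i', k)))
            = if i = i' then 1 else 0 := by
        intro i
        rw [Multiset.count_add]
        have h1 : ((T i (g i)).map Sum.inl).count
            (Sum.inr (i', k) : V ⊕ (Fin m × Fin 4)) = 0 := by
          rw [Multiset.count_eq_zero]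
          simp
        rw [h1, Nat.zero_add]
        by_cases hii : i = i'
        · subst hii
          simp only [if_pos rfl]
          fin_cases k <;> simp
        · rw [if_neg hii]
          rw [Multiset.count_eq_zero]
          simp only [Multiset.insert_eq_cons, Multiset.mem_cons, Multiset.mem_singleton,
            Sum.inr.injEq, Prod.mk.injEq]
          push_neg
          exact ⟨fun hh => absurd hh.symm hii, fun hh => absurd hh.symm hii,
            fun hh => absurd hh.symm hii, fun hh => absurd hh.symm hii⟩
      rw [Finset.sum_congr rfl fun i _ => key i]
      simp
  · rintro ⟨h, hmem, hcnt⟩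
    -- for each i, `h (i,3)` is a singleton fresh variable
    have h3 : ∀ i : Fin m, ∃ t : Fin 3, h (i, 3) = {Sum.inr (i, t.succ)} := by
      intro i
      have := hmem (i, 3)
      simp only [gadgetClauses, Matrix.cons_val_three, Matrix.tail_cons, Matrix.head_cons,
        Finset.mem_insert, Finset.mem_singleton] at this
      rcases this with h | h | h
      · exact ⟨0, by simpa using h⟩
      · exact ⟨1, by simpa using h⟩
      · exact ⟨2, by simpa using h⟩
    choose t ht using h3
    -- the clause `t i` must pick the term `T i (t i) · u i`
    have hT : ∀ i : Fin m,
        h (i, (t i).castSucc) = (T i (t i)).map Sum.inl + {Sum.inr (i, 0)} := by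
      intro i
      have two_le : ∀ (j : Fin 4), j ≠ 3 →
          h (i, j) = {Sum.inr (i, (t i).succ)} → False := by
        intro j hj heq
        have hle := hcnt (Sum.inr (i, (t i).succ))
        have hpne : ((i : Fin m), j) ≠ ((i : Fin m), (3 : Fin 4)) := by
          simp [Prod.ext_iff, hj]
        have h2le : 2 ≤ (∑ c : Fin m × Fin 4, h c).count (Sum.inr (i, (t i).succ)) := by
          rw [Multiset.count_sum']
          calc (2 : ℕ) = ∑ c ∈ ({((i : Fin m), j), ((i : Fin m), (3 : Fin 4))} :
                Finset (Fin m × Fin 4)), (h c).count (Sum.inr (i, (t i).succ)) := by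
                rw [Finset.sum_pair hpne, heq, ht i]; simp
            _ ≤ _ := Finset.sum_le_sum_of_subset (Finset.subset_univ _)
        omega
      have hm := hmem (i, (t i).castSucc)
      obtain ⟨k, hk⟩ : ∃ k, t i = k := ⟨_, rfl⟩
      rw [hk] at hm ⊢
      fin_cases k
      · replace hm : h (i, Fin.castSucc ⟨0, by omega⟩) ∈
            ({(T i 0).map Sum.inl + {Sum.inr (i, 0)},
              ({Sum.inr (i, 1)} : Multiset (V ⊕ (Fin m × Fin 4)))} : Finset _) := hm
        rcases Finset.mem_insert.mp hm with hm | hm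
        · exact hm
        · exact absurd (Finset.mem_singleton.mp hm)
            (fun heq => two_le (Fin.castSucc (0 : Fin 3)) (by decide) (by rw [hk]; exact heq))
      · replace hm : h (i, Fin.castSucc ⟨1, by omega⟩) ∈
            ({(T i 1).map Sum.inl + {Sum.inr (i, 0)},
              ({Sum.inr (i, 2)} : Multiset (V ⊕ (Fin m × Fin 4)))} : Finset _) := hm
        rcases Finset.mem_insert.mp hm with hm | hm
        · exact hm
        · exact absurd (Finset.mem_singleton.mp hm)
            (fun heq => two_le (Fin.castSucc (1 : Fin 3)) (by decide) (by rw [hk]; exact heq))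
      · replace hm : h (i, Fin.castSucc ⟨2, by omega⟩) ∈
            ({(T i 2).map Sum.inl + {Sum.inr (i, 0)},
              ({Sum.inr (i, 3)} : Multiset (V ⊕ (Fin m × Fin 4)))} : Finset _) := hm
        rcases Finset.mem_insert.mp hm with hm | hm
        · exact hm
        · exact absurd (Finset.mem_singleton.mp hm)
            (fun heq => two_le (Fin.castSucc (2 : Fin 3)) (by decide) (by rw [hk]; exact heq))
    refine ⟨t, fun x => ?_⟩
    have key : (∑ i, T i (t i)).count x
        ≤ (∑ c : Fin m × Fin 4, h c).count (Sum.inl x) := by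
      rw [Multiset.count_sum', Multiset.count_sum', Fintype.sum_prod_type]
      refine Finset.sum_le_sum fun i _ => ?_
      have h1 : (T i (t i)).count x = (h (i, (t i).castSucc)).count (Sum.inl x) := by
        rw [hT i, Multiset.count_add,
          Multiset.count_map_eq_count' _ _ Sum.inl_injective]
        simp
      rw [h1]
      exact Finset.single_le_sum (f := fun j => (h (i, j)).count (Sum.inl x))
        (fun _ _ => Nat.zero_le _) (Finset.mem_univ _)
    exact key.trans (hcnt (Sum.inl x))
end

section
/- Let V have decidable equality and let T : Fin m → Fin 3 → Finset V give the terms of a 2-ΠΣ3Π polynomial f with m clauses, each term being multilinear with at most 2 variables (card (T i j) ≤ 2). Work over W := V ⊕ (Fin m × Fin 2), writing u i := Sum.inr (i,0) and v i := Sum.inr (i,1). Define the polynomial p(f) over W with 3m two-term clauses: for each i ∈ Fin m and j ∈ Fin 3, the clause whose two terms are the multiset 2·((T i j).val.map Sum.inl) + 2·{u i} (i.e., T i j squared times u i squared) and the singleton {v i}. Then f has a multilinear monomial in its sum-product expansion (there exists g : Fin m → Fin 3 with the sets T i (g i), i ∈ Fin m, pairwise disjoint) if and only if p(f) has a 3-monomial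 in its sum-product expansion (a choice of one term from each of the 3m clauses whose multiset sum has every multiplicity at most 2). -/
/-- The clauses of the 3-ΠΣ2Π6 polynomial `p(f)` built from a 2-ΠΣ3Π polynomial
with multilinear terms `T` (Section 7 of the paper): for each original clause
`i` and each `j : Fin 3`, with fresh variables `u i = Sum.inr (i,0)` and
`v i = Sum.inr (i,1)`, the two-term clause `(T i j)² · (u i)² + v i`. -/
def squareGadgetClause {V : Type*} [DecidableEq V] {m : ℕ}
    (T : Fin m → Fin 3 → Finset V) (c : Fin m × Fin 3) :
    Finset (Multiset (V ⊕ (Fin m × Fin 2))) :=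
  {2 • ((T c.1 c.2).val.map Sum.inl) +
      2 • ({Sum.inr (c.1, 0)} : Multiset (V ⊕ (Fin m × Fin 2))),
   {Sum.inr (c.1, 1)}}

section Aux

variable {V : Type*} [DecidableEq V] {m : ℕ} (T : Fin m → Fin 3 → Finset V)

/-- The squared term of the gadget clause. -/
def sqTerm (i : Fin m) (j : Fin 3) : Multiset (V ⊕ (Fin m × Fin 2)) :=
  2 • ((T i j).val.map Sum.inl) + 2 • ({Sum.inr (i, 0)} : Multiset (V ⊕ (Fin m × Fin 2)))

lemma count_sqTerm_inl (i : Fin m) (j : Fin 3) (a : V) :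
    (sqTerm T i j).count (Sum.inl a) = 2 * (T i j).val.count a := by
  simp [sqTerm, Multiset.count_nsmul, Multiset.count_singleton,
    Multiset.count_map_eq_count' _ _ Sum.inl_injective]

lemma count_sqTerm_inr (i : Fin m) (j : Fin 3) (p : Fin m × Fin 2) :
    (sqTerm T i j).count (Sum.inr p) = if p = (i, 0) then 2 else 0 := by
  have h0 : ((T i j).val.map Sum.inl).count (Sum.inr p : V ⊕ (Fin m × Fin 2)) = 0 := by
    rw [Multiset.count_eq_zero]
    simp
  simp only [sqTerm, Multiset.count_add, Multiset.count_nsmul, h0, Multiset.count_singleton,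
    Sum.inr.injEq, mul_zero, zero_add]
  split <;> simp_all

lemma sum_ite_ne_three (c : ℕ) (b : Fin 3) :
    ∑ j : Fin 3, (if j = b then 0 else c) = 2 * c := by
  fin_cases b <;> simp [Fin.sum_univ_three] <;> ring

end Aux

/-- Reduction correctness for 3-monomial testing (Section 7).
A 2-ΠΣ3Π polynomial with multilinear terms `T` (each of at most 2 variables)
has a multilinear monomial iff the polynomial with the `3 m` clauses
`squareGadgetClause T` has a 3-monomial (every multiplicity at most 2). -/
theorem twoPiSigma3Pi_multilinear_iff_gadget_threeMonomial
    {V : Type*} [DecidableEq V] {m : ℕ}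
    (T : Fin m → Fin 3 → Finset V) (hT : ∀ i j, (T i j).card ≤ 2) :
    (∃ g : Fin m → Fin 3, ∀ i i' : Fin m, i ≠ i' →
      Disjoint (T i (g i)) (T i' (g i'))) ↔
    (∃ h : Fin m × Fin 3 → Multiset (V ⊕ (Fin m × Fin 2)),
      (∀ c : Fin m × Fin 3, h c ∈ squareGadgetClause T c) ∧
      ∀ x : V ⊕ (Fin m × Fin 2), (∑ c : Fin m × Fin 3, h c).count x ≤ 2) := by
  classical
  constructor
  · rintro ⟨g, hg⟩
    refine ⟨fun c => if c.2 = g c.1 then sqTerm T c.1 c.2 else {Sum.inr (c.1, 1)}, ?_, ?_⟩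
    · intro c
      by_cases hc : c.2 = g c.1 <;> simp [squareGadgetClause, sqTerm, hc]
    · intro x
      rw [Multiset.count_sum', Fintype.sum_prod_type]
      rcases x with a | p
      · -- variable from V
        have hinner : ∀ i : Fin m,
            (∑ j : Fin 3, Multiset.count (Sum.inl a : V ⊕ (Fin m × Fin 2))
              (if j = g i then sqTerm T i j else {Sum.inr (i, 1)}))
            = 2 * (T i (g i)).val.count a := by
          intro i
          have : ∀ j : Fin 3,
              Multiset.count (Sum.inl a : V ⊕ (Fin m × Fin 2))
                (if j = g i then sqTerm T i j else {Sum.inr (i, 1)})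
              = if j = g i then 2 * (T i j).val.count a else 0 := by
            intro j
            by_cases hj : j = g i <;>
              simp [hj, count_sqTerm_inl, Multiset.count_singleton]
          rw [Finset.sum_congr rfl fun j _ => this j, Finset.sum_ite_eq']
          simp
        simp only [hinner]
        by_cases hex : ∃ i, a ∈ T i (g i)
        · obtain ⟨i0, hi0⟩ := hex
          rw [Finset.sum_eq_single_of_mem i0 (Finset.mem_univ i0)]
          · have : (T i0 (g i0)).val.count a ≤ 1 :=
              Multiset.nodup_iff_count_le_one.mp (T i0 (g i0)).nodup a
            omega
          · intro b _ hb
            have : a ∉ T b (g b) := by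
              have := hg b i0 hb
              exact fun hmem => (Finset.disjoint_left.mp this hmem) hi0
            simp [(Multiset.count_eq_zero.mpr (fun hm => this (Finset.mem_val.mp hm)) :
              (T b (g b)).val.count a = 0)]
        · push_neg at hex
          have : ∀ i ∈ Finset.univ, 2 * (T i (g i)).val.count a = 0 := by
            intro i _
            have : (T i (g i)).val.count a = 0 :=
              Multiset.count_eq_zero.mpr (by simpa using hex i)
            omega
          rw [Finset.sum_eq_zero this]
          omega
      · rcases p with ⟨i0, k⟩
        fin_cases k <;> simp only [Fin.zero_eta, Fin.mk_one]
        · -- u i0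
          have hinner : ∀ i : Fin m,
              (∑ j : Fin 3, Multiset.count (Sum.inr (i0, 0) : V ⊕ (Fin m × Fin 2))
                (if j = g i then sqTerm T i j else {Sum.inr (i, 1)}))
              = if i = i0 then 2 else 0 := by
            intro i
            have : ∀ j : Fin 3,
                Multiset.count (Sum.inr (i0, 0) : V ⊕ (Fin m × Fin 2))
                  (if j = g i then sqTerm T i j else {Sum.inr (i, 1)})
                = if j = g i then (if i = i0 then 2 else 0) else 0 := by
              intro j
              by_cases hj : j = g i <;>
                [skip; simp [hj, Multiset.count_singleton]]
              rw [if_pos hj, hj, count_sqTerm_inr]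
              by_cases hi : i = i0 <;> simp [hi, Prod.ext_iff]
              · exact fun h => hi h.symm
            rw [Finset.sum_congr rfl fun j _ => this j, Finset.sum_ite_eq']
            simp
          simp only [hinner]
          rw [Finset.sum_ite_eq' Finset.univ i0]
          simp
        · -- v i0
          have hinner : ∀ i : Fin m,
              (∑ j : Fin 3, Multiset.count (Sum.inr (i0, 1) : V ⊕ (Fin m × Fin 2))
                (if j = g i then sqTerm T i j else {Sum.inr (i, 1)}))
              = if i = i0 then 2 else 0 := by
            intro i
            have hterm : ∀ j : Fin 3,
                Multiset.count (Sum.inr (i0, 1) : V ⊕ (Fin m × Fin 2))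
                  (if j = g i then sqTerm T i j else {Sum.inr (i, 1)})
                = if j = g i then 0 else (if i = i0 then 1 else 0) := by
              intro j
              by_cases hj : j = g i
              · rw [if_pos hj, if_pos hj, hj, count_sqTerm_inr]
                simp [Prod.ext_iff]
              · rw [if_neg hj, if_neg hj, Multiset.count_singleton]
                by_cases hi : i = i0 <;> simp [hi, Prod.ext_iff]
                exact fun h => hi h.symm
            rw [Finset.sum_congr rfl fun j _ => hterm j, sum_ite_ne_three]
            by_cases hi : i = i0 <;> simp [hi]
          simp only [hinner]
          rw [Finset.sum_ite_eq' Finset.univ i0]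
          simp
  · rintro ⟨h, hmem, hcount⟩
    have hmem' : ∀ c : Fin m × Fin 3,
        h c = sqTerm T c.1 c.2 ∨ h c = {Sum.inr (c.1, 1)} := by
      intro c
      have := hmem c
      simpa [squareGadgetClause, sqTerm, Finset.mem_insert, Finset.mem_singleton] using this
    have hcount' : ∀ x : V ⊕ (Fin m × Fin 2),
        ∑ i : Fin m, ∑ j : Fin 3, (h (i, j)).count x ≤ 2 := by
      intro x
      have := hcount x
      rwa [Multiset.count_sum', Fintype.sum_prod_type] at this
    have hex : ∀ i : Fin m, ∃ j : Fin 3, h (i, j) = sqTerm T i j := by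
      intro i
      by_contra hc
      push_neg at hc
      have hall : ∀ j : Fin 3, h (i, j) = {Sum.inr (i, 1)} := fun j =>
        (hmem' (i, j)).resolve_left (hc j)
      have h3 : (∑ j : Fin 3, (h (i, j)).count (Sum.inr (i, 1) : V ⊕ (Fin m × Fin 2))) = 3 := by
        simp [Fin.sum_univ_three, hall, Multiset.count_singleton]
      have hle := hcount' (Sum.inr (i, 1))
      have hge : (∑ j : Fin 3, (h (i, j)).count (Sum.inr (i, 1) : V ⊕ (Fin m × Fin 2)))
          ≤ ∑ i' : Fin m, ∑ j : Fin 3,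
            (h (i', j)).count (Sum.inr (i, 1) : V ⊕ (Fin m × Fin 2)) :=
        Finset.single_le_sum (f := fun i' : Fin m => ∑ j : Fin 3,
          (h (i', j)).count (Sum.inr (i, 1) : V ⊕ (Fin m × Fin 2)))
          (fun _ _ => Nat.zero_le _) (Finset.mem_univ i)
      omega
    refine ⟨fun i => (hex i).choose, ?_⟩
    intro i i' hne
    rw [Finset.disjoint_left]
    intro a hai hai'
    have key : ∀ b : Fin m, a ∈ T b ((hex b).choose) →
        2 ≤ ∑ j : Fin 3, (h (b, j)).count (Sum.inl a : V ⊕ (Fin m × Fin 2)) := by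
      intro b hab
      have hb : h (b, (hex b).choose) = sqTerm T b ((hex b).choose) := (hex b).choose_spec
      have hc2 : 2 ≤ (h (b, (hex b).choose)).count (Sum.inl a : V ⊕ (Fin m × Fin 2)) := by
        rw [hb, count_sqTerm_inl]
        have : 1 ≤ (T b ((hex b).choose)).val.count a :=
          Multiset.one_le_count_iff_mem.mpr (by simpa using hab)
        omega
      calc 2 ≤ _ := hc2
        _ ≤ _ := Finset.single_le_sum
          (f := fun j : Fin 3 => (h (b, j)).count (Sum.inl a : V ⊕ (Fin m × Fin 2)))
          (fun _ _ => Nat.zero_le _) (Finset.mem_univ (hex b).choose)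
    have hle := hcount' (Sum.inl a)
    have h4 : 4 ≤ ∑ i'' : Fin m, ∑ j : Fin 3,
        (h (i'', j)).count (Sum.inl a : V ⊕ (Fin m × Fin 2)) := by
      have hsum : (∑ j : Fin 3, (h (i, j)).count (Sum.inl a : V ⊕ (Fin m × Fin 2)))
          + (∑ j : Fin 3, (h (i', j)).count (Sum.inl a : V ⊕ (Fin m × Fin 2)))
          ≤ ∑ i'' : Fin m, ∑ j : Fin 3,
            (h (i'', j)).count (Sum.inl a : V ⊕ (Fin m × Fin 2)) := by
        have hp := Finset.sum_pair (f := fun i'' : Fin m => ∑ j : Fin 3,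
          (h (i'', j)).count (Sum.inl a : V ⊕ (Fin m × Fin 2))) hne
        rw [← hp]
        exact Finset.sum_le_sum_of_subset (Finset.subset_univ _)
      have h1 := key i hai
      have h2 := key i' hai'
      omega
    omega
end

section
/- Let V have decidable equality, let T0, T1, T2 be finite sets over V, and let u, v be two distinct fresh variables not in V (formally work over W := V ⊕ Fin 2). Consider the three two-term clauses, for j ∈ {0,1,2}: {2·((T j).val.map Sum.inl) + 2·{u}, {v}}. Then a choice of one term from each of the three clauses yields a product multiset in which u has multiplicity at most 2 and v has multiplicity at most 2 if and only if exactly one index j selects the term 2·(T j) + 2·{u} (and the other two select {v}); in that case the product equals 2·(T j) + 2·{u} + 2·{v}. -/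
lemma count_map_inl_inr {V : Type*} [DecidableEq V] (s : Multiset V) (x : Fin 2) :
    (s.map Sum.inl).count (Sum.inr x : V ⊕ Fin 2) = 0 := by
  rw [Multiset.count_eq_zero]; simp

lemma sq_term_ne {V : Type*} [DecidableEq V] (T : Finset V) :
    (2 • (T.val.map Sum.inl) + 2 • ({Sum.inr 0} : Multiset (V ⊕ Fin 2)))
      ≠ ({Sum.inr 1} : Multiset (V ⊕ Fin 2)) := by
  intro e
  apply_fun Multiset.count (Sum.inr 0 : V ⊕ Fin 2) at e
  simp [Multiset.count_add, Multiset.count_nsmul, count_map_inl_inr,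
    Multiset.count_singleton] at e

/-- Gadget analysis for 3-monomial testing (Section 7).  Over
`W := V ⊕ Fin 2` with fresh variables `u = Sum.inr 0`, `v = Sum.inr 1`,
consider the three two-term clauses `(T j)²·u² + v` for `j : Fin 3`.  A choice
of one term per clause yields a product in which both `u` and `v` have
multiplicity at most 2 iff exactly one index `j` selects the squared term
`(T j)²·u²` and the other two select `v`; in that case the product equals
`(T j)²·u²·v²`. -/
theorem square_gadget_products {V : Type*} [DecidableEq V]
    (T0 T1 T2 : Finset V)
    (C : Fin 3 → Finset (Multiset (V ⊕ Fin 2)))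
    (hC : C = fun j => {2 • ((![T0, T1, T2] j).val.map Sum.inl) +
        2 • ({Sum.inr 0} : Multiset (V ⊕ Fin 2)), {Sum.inr 1}}) :
    ∀ h : Fin 3 → Multiset (V ⊕ Fin 2), (∀ c, h c ∈ C c) →
      (((∑ c, h c).count (Sum.inr 0) ≤ 2 ∧ (∑ c, h c).count (Sum.inr 1) ≤ 2) ↔
        (∃ j : Fin 3,
          h j = 2 • ((![T0, T1, T2] j).val.map Sum.inl) +
            2 • ({Sum.inr 0} : Multiset (V ⊕ Fin 2)) ∧
          (∀ j' : Fin 3, j' ≠ j → h j' = {Sum.inr 1}) ∧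
          ∑ c, h c = 2 • ((![T0, T1, T2] j).val.map Sum.inl) +
            2 • ({Sum.inr 0} : Multiset (V ⊕ Fin 2)) +
            2 • ({Sum.inr 1} : Multiset (V ⊕ Fin 2)))) := by
  subst hC
  intro h hh
  have hcase : ∀ c : Fin 3, h c = 2 • ((![T0, T1, T2] c).val.map Sum.inl) +
      2 • ({Sum.inr 0} : Multiset (V ⊕ Fin 2)) ∨ h c = {Sum.inr 1} := by
    intro c
    simpa [Finset.mem_insert, Finset.mem_singleton] using hh c
  rw [Fin.sum_univ_three]
  rcases hcase 0 with h0 | h0 <;> rcases hcase 1 with h1 | h1 <;>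
    rcases hcase 2 with h2 | h2
  -- AAA
  · constructor
    · rintro ⟨hu, -⟩
      simp [h0, h1, h2, Multiset.count_add, Multiset.count_nsmul,
        count_map_inl_inr, Multiset.count_singleton] at hu
    · rintro ⟨j, -, hj', -⟩
      exfalso
      fin_cases j
      · exact sq_term_ne T1 (by simpa using h1.symm.trans (hj' 1 (by decide)))
      · exact sq_term_ne T0 (by simpa using h0.symm.trans (hj' 0 (by decide)))
      · exact sq_term_ne T0 (by simpa using h0.symm.trans (hj' 0 (by decide)))
  -- AAB
  · constructor
    · rintro ⟨hu, -⟩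
      simp [h0, h1, h2, Multiset.count_add, Multiset.count_nsmul,
        count_map_inl_inr, Multiset.count_singleton] at hu
    · rintro ⟨j, -, hj', -⟩
      exfalso
      fin_cases j
      · exact sq_term_ne T1 (by simpa using h1.symm.trans (hj' 1 (by decide)))
      · exact sq_term_ne T0 (by simpa using h0.symm.trans (hj' 0 (by decide)))
      · exact sq_term_ne T0 (by simpa using h0.symm.trans (hj' 0 (by decide)))
  -- ABA
  · constructor
    · rintro ⟨hu, -⟩
      simp [h0, h1, h2, Multiset.count_add, Multiset.count_nsmul,
        count_map_inl_inr, Multiset.count_singleton] at hu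
    · rintro ⟨j, -, hj', -⟩
      exfalso
      fin_cases j
      · exact sq_term_ne T2 (by simpa using h2.symm.trans (hj' 2 (by decide)))
      · exact sq_term_ne T0 (by simpa using h0.symm.trans (hj' 0 (by decide)))
      · exact sq_term_ne T0 (by simpa using h0.symm.trans (hj' 0 (by decide)))
  -- ABB : good, j = 0
  · have hgood : ∃ j : Fin 3,
        h j = 2 • ((![T0, T1, T2] j).val.map Sum.inl) +
          2 • ({Sum.inr 0} : Multiset (V ⊕ Fin 2)) ∧
        (∀ j' : Fin 3, j' ≠ j → h j' = {Sum.inr 1}) ∧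
        h 0 + h 1 + h 2 = 2 • ((![T0, T1, T2] j).val.map Sum.inl) +
          2 • ({Sum.inr 0} : Multiset (V ⊕ Fin 2)) +
          2 • ({Sum.inr 1} : Multiset (V ⊕ Fin 2)) := by
      refine ⟨0, h0, ?_, ?_⟩
      · intro j' hj'; fin_cases j' <;> simp_all
      · rw [h0, h1, h2]; rw [two_nsmul]; abel
    refine ⟨fun _ => hgood, fun _ => ?_⟩
    constructor <;>
      simp [h0, h1, h2, Multiset.count_add, Multiset.count_nsmul,
        count_map_inl_inr, Multiset.count_singleton]
  -- BAA
  · constructor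
    · rintro ⟨hu, -⟩
      simp [h0, h1, h2, Multiset.count_add, Multiset.count_nsmul,
        count_map_inl_inr, Multiset.count_singleton] at hu
    · rintro ⟨j, -, hj', -⟩
      exfalso
      fin_cases j
      · exact sq_term_ne T1 (by simpa using h1.symm.trans (hj' 1 (by decide)))
      · exact sq_term_ne T2 (by simpa using h2.symm.trans (hj' 2 (by decide)))
      · exact sq_term_ne T1 (by simpa using h1.symm.trans (hj' 1 (by decide)))
  -- BAB : good, j = 1
  · have hgood : ∃ j : Fin 3,
        h j = 2 • ((![T0, T1, T2] j).val.map Sum.inl) +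
          2 • ({Sum.inr 0} : Multiset (V ⊕ Fin 2)) ∧
        (∀ j' : Fin 3, j' ≠ j → h j' = {Sum.inr 1}) ∧
        h 0 + h 1 + h 2 = 2 • ((![T0, T1, T2] j).val.map Sum.inl) +
          2 • ({Sum.inr 0} : Multiset (V ⊕ Fin 2)) +
          2 • ({Sum.inr 1} : Multiset (V ⊕ Fin 2)) := by
      refine ⟨1, h1, ?_, ?_⟩
      · intro j' hj'; fin_cases j' <;> simp_all
      · rw [h0, h1, h2]; rw [two_nsmul]; abel
    refine ⟨fun _ => hgood, fun _ => ?_⟩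
    constructor <;>
      simp [h0, h1, h2, Multiset.count_add, Multiset.count_nsmul,
        count_map_inl_inr, Multiset.count_singleton]
  -- BBA : good, j = 2
  · have hgood : ∃ j : Fin 3,
        h j = 2 • ((![T0, T1, T2] j).val.map Sum.inl) +
          2 • ({Sum.inr 0} : Multiset (V ⊕ Fin 2)) ∧
        (∀ j' : Fin 3, j' ≠ j → h j' = {Sum.inr 1}) ∧
        h 0 + h 1 + h 2 = 2 • ((![T0, T1, T2] j).val.map Sum.inl) +
          2 • ({Sum.inr 0} : Multiset (V ⊕ Fin 2)) +
          2 • ({Sum.inr 1} : Multiset (V ⊕ Fin 2)) := by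
      refine ⟨2, h2, ?_, ?_⟩
      · intro j' hj'; fin_cases j' <;> simp_all
      · rw [h0, h1, h2]; rw [two_nsmul]; abel
    refine ⟨fun _ => hgood, fun _ => ?_⟩
    constructor <;>
      simp [h0, h1, h2, Multiset.count_add, Multiset.count_nsmul,
        count_map_inl_inr, Multiset.count_singleton]
  -- BBB
  · constructor
    · rintro ⟨-, hv⟩
      simp [h0, h1, h2, Multiset.count_add, Multiset.count_singleton] at hv
    · rintro ⟨j, hj, -, -⟩
      exfalso
      fin_cases j
      · exact absurd (by simpa using hj.symm.trans h0) (sq_term_ne T0)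
      · exact absurd (by simpa using hj.symm.trans h1) (sq_term_ne T1)
      · exact absurd (by simpa using hj.symm.trans h2) (sq_term_ne T2)
end

section
/- Let c ≥ 2 be an integer, let V have decidable equality, and let F : Fin m → Finset V be a ΠΣ polynomial with m nonempty clauses. Define the simple bipartite graph B on (Fin m) ⊕ (V × Fin (c−1)) in which Sum.inl i is adjacent to Sum.inr (v, t) if and only if v ∈ F i, with no other adjacencies. Then F has a c-monomial in its sum-product expansion — i.e., there exists g : Fin m → V with g i ∈ F i for all i and, for every v ∈ V, the number of indices i with g i = v is at most c−1 — if and only if B contains a matching with exactly m edges. -/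
/-- The bipartite graph for `c`-monomial testing in a ΠΣ polynomial: each
variable `v` is duplicated into `c - 1` vertices `Sum.inr (v, t)`, and clause
vertex `Sum.inl i` is adjacent to `Sum.inr (v, t)` exactly when `v ∈ F i`. -/
def cMonomialBipartiteGraph {V : Type*} {m : ℕ} (c : ℕ) (F : Fin m → Finset V) :
    SimpleGraph (Fin m ⊕ (V × Fin (c - 1))) :=
  SimpleGraph.fromRel (fun x y => ∃ (i : Fin m) (v : V) (t : Fin (c - 1)),
    x = Sum.inl i ∧ y = Sum.inr (v, t) ∧ v ∈ F i)

/-- Matching reduction for `c`-monomial testing in ΠΣ polynomials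
(Section 7).  For `c ≥ 2`, a ΠΣ polynomial `F` with `m` nonempty clauses has a
`c`-monomial (a choice of one variable per clause in which every variable is
chosen at most `c - 1` times) iff the bipartite graph contains a matching with
exactly `m` edges. -/
theorem piSigma_cMonomial_iff_matching {V : Type*} [DecidableEq V] {m c : ℕ}
    (hc : 2 ≤ c) (F : Fin m → Finset V) (hF : ∀ i, (F i).Nonempty) :
    (∃ g : Fin m → V, (∀ i, g i ∈ F i) ∧
      ∀ v : V, (Finset.univ.filter fun i => g i = v).card ≤ c - 1) ↔
    (∃ M : (cMonomialBipartiteGraph c F).Subgraph,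
      M.IsMatching ∧ M.edgeSet.ncard = m) := by
  classical
  have hadjG : ∀ x y, (cMonomialBipartiteGraph c F).Adj x y ↔ x ≠ y ∧
      ((∃ i v t, x = Sum.inl i ∧ y = Sum.inr (v, t) ∧ v ∈ F i) ∨
       (∃ i v t, y = Sum.inl i ∧ x = Sum.inr (v, t) ∧ v ∈ F i)) := by
    intro x y
    exact SimpleGraph.fromRel_adj _ x y
  constructor
  · rintro ⟨g, hg, hcard⟩
    -- build injections of each fiber into Fin (c-1)
    have hemb : ∀ v : V, Nonempty ({i : Fin m // g i = v} ↪ Fin (c - 1)) := by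
      intro v
      apply Function.Embedding.nonempty_of_card_le
      rw [Fintype.card_fin, Fintype.card_subtype]
      exact hcard v
    have e : ∀ v : V, {i : Fin m // g i = v} ↪ Fin (c - 1) := fun v => (hemb v).some
    have hc1 : 0 < c - 1 := by omega
    set f : V → Fin m → Fin (c - 1) := fun v i =>
      if h : g i = v then e v ⟨i, h⟩ else ⟨0, hc1⟩ with hf
    set t : Fin m → Fin (c - 1) := fun i => f (g i) i with ht
    have key : ∀ i j, g i = g j → t i = t j → i = j := by
      intro i j hgij htij
      have e1 : t i = e (g i) ⟨i, rfl⟩ := dif_pos rfl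
      have e2 : f (g i) j = e (g i) ⟨j, hgij.symm⟩ := dif_pos hgij.symm
      have e3 : t j = f (g i) j := by rw [ht]; simp only; rw [hgij]
      have : e (g i) ⟨i, rfl⟩ = e (g i) ⟨j, hgij.symm⟩ := by
        rw [← e1, htij, e3, e2]
      have := (e (g i)).injective this
      exact congrArg Subtype.val this
    -- the matching subgraph
    refine ⟨{ verts := {x | ∃ i, x = Sum.inl i ∨ x = Sum.inr (g i, t i)}
              Adj := fun x y => ∃ i, (x = Sum.inl i ∧ y = Sum.inr (g i, t i)) ∨
                (y = Sum.inl i ∧ x = Sum.inr (g i, t i))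
              adj_sub := by
                rintro x y ⟨i, ⟨rfl, rfl⟩ | ⟨rfl, rfl⟩⟩
                · exact (hadjG _ _).mpr ⟨Sum.inl_ne_inr, Or.inl ⟨i, g i, t i, rfl, rfl, hg i⟩⟩
                · exact (hadjG _ _).mpr ⟨Sum.inr_ne_inl, Or.inr ⟨i, g i, t i, rfl, rfl, hg i⟩⟩
              edge_vert := by
                rintro x y ⟨i, ⟨rfl, rfl⟩ | ⟨rfl, rfl⟩⟩
                · exact ⟨i, Or.inl rfl⟩
                · exact ⟨i, Or.inr rfl⟩
              symm := by
                constructor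
                rintro x y ⟨i, ⟨rfl, rfl⟩ | ⟨rfl, rfl⟩⟩
                · exact ⟨i, Or.inr ⟨rfl, rfl⟩⟩
                · exact ⟨i, Or.inl ⟨rfl, rfl⟩⟩ }, ?_, ?_⟩
    · -- IsMatching
      rintro x ⟨i, rfl | rfl⟩
      · refine ⟨Sum.inr (g i, t i), ⟨i, Or.inl ⟨rfl, rfl⟩⟩, ?_⟩
        rintro y ⟨j, ⟨hj, rfl⟩ | ⟨rfl, hj⟩⟩
        · obtain rfl : i = j := Sum.inl.inj hj
          rfl
        · exact absurd hj (by simp)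
      · refine ⟨Sum.inl i, ⟨i, Or.inr ⟨rfl, rfl⟩⟩, ?_⟩
        rintro y ⟨j, ⟨hj, rfl⟩ | ⟨rfl, hj⟩⟩
        · exact absurd hj (by simp)
        · obtain ⟨h1, h2⟩ := Prod.mk.injEq .. ▸ Sum.inr.inj hj
          obtain rfl : j = i := key j i h1.symm h2.symm
          rfl
    · -- edge count
      have hedge : SimpleGraph.Subgraph.edgeSet (G := cMonomialBipartiteGraph c F)
          { verts := {x | ∃ i, x = Sum.inl i ∨ x = Sum.inr (g i, t i)}
            Adj := fun x y => ∃ i, (x = Sum.inl i ∧ y = Sum.inr (g i, t i)) ∨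
              (y = Sum.inl i ∧ x = Sum.inr (g i, t i))
            adj_sub := by
              rintro x y ⟨i, ⟨rfl, rfl⟩ | ⟨rfl, rfl⟩⟩
              · exact (hadjG _ _).mpr ⟨Sum.inl_ne_inr, Or.inl ⟨i, g i, t i, rfl, rfl, hg i⟩⟩
              · exact (hadjG _ _).mpr ⟨Sum.inr_ne_inl, Or.inr ⟨i, g i, t i, rfl, rfl, hg i⟩⟩
            edge_vert := by
              rintro x y ⟨i, ⟨rfl, rfl⟩ | ⟨rfl, rfl⟩⟩
              · exact ⟨i, Or.inl rfl⟩
              · exact ⟨i, Or.inr rfl⟩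
            symm := by
              constructor
              rintro x y ⟨i, ⟨rfl, rfl⟩ | ⟨rfl, rfl⟩⟩
              · exact ⟨i, Or.inr ⟨rfl, rfl⟩⟩
              · exact ⟨i, Or.inl ⟨rfl, rfl⟩⟩ } =
          Set.range (fun i : Fin m => s(Sum.inl i, Sum.inr (g i, t i))) := by
        ext z
        induction z using Sym2.ind with
        | _ x y =>
          simp only [SimpleGraph.Subgraph.mem_edgeSet, Set.mem_range]
          constructor
          · rintro ⟨i, ⟨rfl, rfl⟩ | ⟨rfl, rfl⟩⟩
            · exact ⟨i, rfl⟩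
            · exact ⟨i, Sym2.eq_swap⟩
          · rintro ⟨i, hi⟩
            rw [Sym2.eq_iff] at hi
            rcases hi with ⟨rfl, rfl⟩ | ⟨rfl, rfl⟩
            · exact ⟨i, Or.inl ⟨rfl, rfl⟩⟩
            · exact ⟨i, Or.inr ⟨rfl, rfl⟩⟩
      rw [hedge]
      have hinj : Function.Injective
          (fun i : Fin m => s(Sum.inl i, Sum.inr (g i, t i)) :
            Fin m → Sym2 (Fin m ⊕ (V × Fin (c - 1)))) := by
        intro i j hij
        simp only [Sym2.eq_iff] at hij
        rcases hij with ⟨h1, _⟩ | ⟨h1, _⟩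
        · exact Sum.inl.inj h1
        · exact absurd h1 (by simp)
      rw [← Set.image_univ, Set.ncard_image_of_injective _ hinj, Set.ncard_univ,
        Nat.card_eq_fintype_card, Fintype.card_fin]
  · rintro ⟨M, hM, hMcard⟩
    have hadj : ∀ x y, M.Adj x y → ∃ i v t, v ∈ F i ∧
        ((x = Sum.inl i ∧ y = Sum.inr (v, t)) ∨ (y = Sum.inl i ∧ x = Sum.inr (v, t))) := by
      intro x y hxy
      obtain ⟨-, h | h⟩ := (hadjG x y).mp (M.adj_sub hxy)
      · obtain ⟨i, v, t, h1, h2, h3⟩ := h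
        exact ⟨i, v, t, h3, Or.inl ⟨h1, h2⟩⟩
      · obtain ⟨i, v, t, h1, h2, h3⟩ := h
        exact ⟨i, v, t, h3, Or.inr ⟨h1, h2⟩⟩
    rcases Nat.eq_zero_or_pos m with rfl | hm
    · exact ⟨fun i => i.elim0, fun i => i.elim0, fun v => by simp⟩
    -- edgeSet is finite with m elements
    have hfin : M.edgeSet.Finite := by
      by_contra hinf
      rw [Set.Infinite.ncard hinf] at hMcard
      omega
    haveI := hfin.fintype
    -- each edge contains a clause vertex
    have hsel : ∀ z : M.edgeSet, ∃ i : Fin m, Sum.inl i ∈ z.1 := by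
      rintro ⟨z, hz⟩
      induction z using Sym2.ind with
      | _ x y =>
        obtain ⟨i, v, t, -, ⟨rfl, -⟩ | ⟨rfl, -⟩⟩ := hadj x y hz
        · exact ⟨i, Sym2.mem_mk_left _ _⟩
        · exact ⟨i, Sym2.mem_mk_right _ _⟩
    choose ψ hψ using hsel
    -- helper: edge containing inl i determines an M-adjacency
    have hmemAdj : ∀ (z : Sym2 (Fin m ⊕ (V × Fin (c - 1)))), z ∈ M.edgeSet →
        ∀ x, x ∈ z → ∃ y, M.Adj x y ∧ z = s(x, y) := by
      intro z hz x hx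
      induction z using Sym2.ind with
      | _ a b =>
        rcases Sym2.mem_iff.mp hx with rfl | rfl
        · exact ⟨b, hz, rfl⟩
        · exact ⟨a, M.adj_symm hz, Sym2.eq_swap⟩
    have hψinj : Function.Injective ψ := by
      intro z1 z2 h12
      obtain ⟨y1, ha1, he1⟩ := hmemAdj z1 z1.2 _ (hψ z1)
      obtain ⟨y2, ha2, he2⟩ := hmemAdj z2 z2.2 _ (h12 ▸ hψ z2)
      obtain ⟨_, _, hu⟩ := hM (M.edge_vert ha1)
      have : y1 = y2 := (hu y1 ha1).trans (hu y2 ha2).symm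
      apply Subtype.ext
      rw [he1, he2, h12, this]
    have hcardE : Fintype.card M.edgeSet = m := by
      rw [← Nat.card_eq_fintype_card, Nat.card_coe_set_eq, hMcard]
    have hψsurj : Function.Surjective ψ := by
      have : Function.Bijective ψ :=
        (Fintype.bijective_iff_injective_and_card ψ).mpr ⟨hψinj, by simp [hcardE]⟩
      exact this.2
    -- every clause vertex is matched to some inr (v, t)
    have hmatch : ∀ i : Fin m, ∃ (v : V) (t : Fin (c - 1)),
        v ∈ F i ∧ M.Adj (Sum.inl i) (Sum.inr (v, t)) := by
      intro i
      obtain ⟨z, rfl⟩ := hψsurj i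
      obtain ⟨y, hy, -⟩ := hmemAdj z z.2 _ (hψ z)
      obtain ⟨j, v, t, hv, ⟨h1, h2⟩ | ⟨h1, h2⟩⟩ := hadj _ _ hy
      · obtain rfl : ψ z = j := Sum.inl.inj h1
        exact ⟨v, t, hv, h2 ▸ hy⟩
      · exact absurd h2 (by simp)
    choose g τ hgF hgAdj using hmatch
    refine ⟨g, hgF, fun v => ?_⟩
    -- the map i ↦ τ i is injective on the fiber over v
    have : ∀ i ∈ Finset.univ.filter (fun i => g i = v),
        ∀ j ∈ Finset.univ.filter (fun j => g j = v), τ i = τ j → i = j := by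
      simp only [Finset.mem_filter, Finset.mem_univ, true_and]
      intro i hi j hj hij
      have ha1 : M.Adj (Sum.inr (v, τ i)) (Sum.inl i) := hi ▸ (hgAdj i).symm
      have ha2 : M.Adj (Sum.inr (v, τ i)) (Sum.inl j) := by
        rw [hij]; exact hj ▸ (hgAdj j).symm
      obtain ⟨_, _, hu⟩ := hM (M.edge_vert ha1)
      exact Sum.inl.inj ((hu (Sum.inl i) ha1).trans (hu (Sum.inl j) ha2).symm)
    calc (Finset.univ.filter fun i => g i = v).card
        ≤ (Finset.univ : Finset (Fin (c - 1))).card :=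
          Finset.card_le_card_of_injOn τ (fun _ _ => Finset.mem_univ _) this
      _ = c - 1 := by simp
end

section
/- Let V have decidable equality and let T : Fin m → Fin 3 → Finset V give the (multilinear) terms of a ΠΣ3Π polynomial f with m clauses. Define the simple graph G on Fin m × Fin 3 in which (i, j) is adjacent to (i', j') if and only if i ≠ i' and the sets T i j and T i' j' are disjoint. Then f has a multilinear monomial in its sum-product expansion — i.e., there exists g : Fin m → Fin 3 such that for all i ≠ i' the sets T i (g i) and T i' (g i') are disjoint — if and only if G contains a clique of size m. -/
/-- The clique-reduction graph of Theorem 8: vertices are the term positions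
`(i, j) : Fin m × Fin 3`, and `(i, j)` is adjacent to `(i', j')` iff they come
from different clauses (`i ≠ i'`) and the terms `T i j`, `T i' j'` share no
variable. -/
def termCliqueGraph {V : Type*} [DecidableEq V] {m : ℕ}
    (T : Fin m → Fin 3 → Finset V) : SimpleGraph (Fin m × Fin 3) where
  Adj p q := p.1 ≠ q.1 ∧ Disjoint (T p.1 p.2) (T q.1 q.2)
  symm := ⟨fun _ _ h => ⟨h.1.symm, h.2.symm⟩⟩
  loopless := ⟨fun _ h => h.1 rfl⟩

/-- Reduction to maximum clique (Theorem 8).  A ΠΣ3Π polynomial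
with multilinear terms `T` has a multilinear monomial (a choice of one term per
clause with pairwise disjoint chosen terms) iff the graph `termCliqueGraph T`
contains a clique of size `m`. -/
theorem piSigma3Pi_multilinear_iff_clique {V : Type*} [DecidableEq V] {m : ℕ}
    (T : Fin m → Fin 3 → Finset V) :
    (∃ g : Fin m → Fin 3, ∀ i i' : Fin m, i ≠ i' →
      Disjoint (T i (g i)) (T i' (g i'))) ↔
    (∃ s : Finset (Fin m × Fin 3), (termCliqueGraph T).IsNClique m s) := by
  constructor
  · rintro ⟨g, hg⟩
    refine ⟨(Finset.univ : Finset (Fin m)).image (fun i => (i, g i)), ?_, ?_⟩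
    · intro p hp q hq hpq
      simp only [Finset.coe_image, Set.mem_image] at hp hq
      obtain ⟨i, -, rfl⟩ := hp
      obtain ⟨i', -, rfl⟩ := hq
      have hii : i ≠ i' := fun h => hpq (by subst h; rfl)
      exact ⟨hii, hg i i' hii⟩
    · rw [Finset.card_image_of_injective _ (fun a b h => (Prod.mk.injEq _ _ _ _).mp h |>.1)]
      simp
  · rintro ⟨s, hclique, hcard⟩
    have hinj : Set.InjOn Prod.fst (s : Set (Fin m × Fin 3)) := by
      intro p hp q hq h
      by_contra hne
      exact (hclique hp hq hne).1 h
    have himg : s.image Prod.fst = Finset.univ := by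
      apply Finset.eq_univ_of_card
      rw [Finset.card_image_of_injOn hinj, hcard, Fintype.card_fin]
    have hsur : ∀ i : Fin m, ∃ p ∈ s, p.1 = i := by
      intro i
      have : i ∈ s.image Prod.fst := himg ▸ Finset.mem_univ i
      simpa using this
    choose p hp hp1 using hsur
    refine ⟨fun i => (p i).2, fun i i' hii => ?_⟩
    have hne : p i ≠ p i' := fun h => hii ((hp1 i).symm.trans (h ▸ hp1 i'))
    have := (hclique (hp i) (hp i') hne).2
    rwa [hp1 i, hp1 i'] at this
end

section
/- Let G be a simple graph on Fin n, let c ≥ 1 be an integer, and define polynomials in MvPolynomial (Fin n) ℕ by p₁ᵢ = (X i)^c and p_{k+1,i} = (X i)^c · ∑_{j ∈ G.neighborFinset i} p_{k,j}, and set p(G,k) = ∑_{i} p_{k,i}. Then for every k ≥ 1 and every finite set S ⊆ Fin n with |S| = k, the coefficient in p(G,k) of the monomial whose exponent is c on each variable of S and 0 elsewhere is nonzero if and only if G contains a path on exactly the vertices of S, i.e., there exist vertices a, b and a walk W : G.Walk a b with W.length = k − 1 that is a path (no repeated vertices) and whose vertex support is exactly S. -/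
/-- The path-detecting polynomials of Section 1: `p₁ᵢ = xᵢ^c` and
`p_{k+1,i} = xᵢ^c · ∑_{j ∈ N(i)} p_{k,j}` (the value at `k = 0` is irrelevant
and set to `1`). -/
noncomputable def pathPoly {n : ℕ} (G : SimpleGraph (Fin n)) [DecidableRel G.Adj]
    (c : ℕ) : ℕ → Fin n → MvPolynomial (Fin n) ℕ
  | 0, _ => 1
  | 1, i => MvPolynomial.X i ^ c
  | (k + 2), i => MvPolynomial.X i ^ c *
      ∑ j ∈ G.neighborFinset i, pathPoly G c (k + 1) j

open MvPolynomial Finsupp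

lemma pathPoly_succ {n : ℕ} (G : SimpleGraph (Fin n)) [DecidableRel G.Adj]
    (c k : ℕ) (hk : 1 ≤ k) (i : Fin n) :
    pathPoly G c (k + 1) i =
      MvPolynomial.X i ^ c * ∑ j ∈ G.neighborFinset i, pathPoly G c k j := by
  cases k with
  | zero => omega
  | succ m => rfl

lemma sum_single_apply {n : ℕ} (c : ℕ) (S : Finset (Fin n)) (i : Fin n) :
    (∑ v ∈ S, Finsupp.single v c) i = if i ∈ S then c else 0 := by
  classical
  rw [Finset.sum_apply']
  simp [Finsupp.single_apply, Finset.sum_ite_eq]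

lemma key {n : ℕ} (G : SimpleGraph (Fin n)) [DecidableRel G.Adj]
    (c : ℕ) (hc : 1 ≤ c) (k : ℕ) (hk : 1 ≤ k) :
    ∀ (i : Fin n) (S : Finset (Fin n)), S.card = k →
      (MvPolynomial.coeff (∑ v ∈ S, Finsupp.single v c) (pathPoly G c k i) ≠ 0 ↔
        ∃ (b : Fin n) (W : G.Walk i b), W.IsPath ∧ W.length = k - 1 ∧
          W.support.toFinset = S) := by
  classical
  induction k, hk using Nat.le_induction with
  | base =>
    intro i S hS
    obtain ⟨v, rfl⟩ := Finset.card_eq_one.mp hS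
    simp only [pathPoly, Finset.sum_singleton]
    rw [coeff_single_X_pow]
    constructor
    · intro h
      have hiv : i = v := by
        by_contra hne
        simp [hne] at h
        omega
      subst hiv
      exact ⟨i, SimpleGraph.Walk.nil, by simp⟩
    · rintro ⟨b, W, hP, hlen, hsup⟩
      have : i ∈ W.support := W.start_mem_support
      rw [← List.mem_toFinset, hsup, Finset.mem_singleton] at this
      simp [this]
  | succ k hk ih =>
    intro i S hS
    rw [pathPoly_succ G c k hk i]
    by_cases hi : i ∈ S
    · -- rewrite the exponent vector
      have hsplit : (∑ v ∈ S, Finsupp.single v c) =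
          Finsupp.single i c + ∑ v ∈ S.erase i, Finsupp.single v c :=
        (Finset.add_sum_erase S _ hi).symm
      rw [hsplit, X_pow_eq_monomial, coeff_monomial_mul, one_mul, coeff_sum]
      have hcard : (S.erase i).card = k := by
        rw [Finset.card_erase_of_mem hi, hS]
        omega
      rw [show (∑ x ∈ G.neighborFinset i,
          coeff (∑ v ∈ S.erase i, Finsupp.single v c) (pathPoly G c k x) ≠ 0) ↔
          ∃ j ∈ G.neighborFinset i,
            coeff (∑ v ∈ S.erase i, Finsupp.single v c) (pathPoly G c k j) ≠ 0 by
        simp only [ne_eq, Finset.sum_eq_zero_iff, not_forall]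
        tauto]
      constructor
      · rintro ⟨j, hj, hcoeff⟩
        obtain ⟨b, W, hP, hlen, hsup⟩ := (ih j (S.erase i) hcard).mp hcoeff
        have hadj : G.Adj i j := (G.mem_neighborFinset i j).mp hj
        have hiW : i ∉ W.support := by
          rw [← List.mem_toFinset, hsup]
          exact Finset.notMem_erase i S
        refine ⟨b, SimpleGraph.Walk.cons hadj W, hP.cons hiW, ?_, ?_⟩
        · simp only [SimpleGraph.Walk.length_cons, hlen]
          omega
        · simp only [SimpleGraph.Walk.support_cons, List.toFinset_cons, hsup]
          exact Finset.insert_erase hi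
      · rintro ⟨b, W, hP, hlen, hsup⟩
        cases W with
        | nil => simp at hlen; omega
        | @cons _ j _ hadj W' =>
          rw [SimpleGraph.Walk.cons_isPath_iff] at hP
          obtain ⟨hP', hiW'⟩ := hP
          have hlen' : W'.length = k - 1 := by
            simp only [SimpleGraph.Walk.length_cons] at hlen
            omega
          have hsup' : W'.support.toFinset = S.erase i := by
            simp only [SimpleGraph.Walk.support_cons, List.toFinset_cons] at hsup
            rw [← hsup, Finset.erase_insert]
            simp only [List.mem_toFinset]
            exact hiW'
          refine ⟨j, (G.mem_neighborFinset i j).mpr hadj, ?_⟩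
          exact (ih j (S.erase i) hcard).mpr ⟨b, W', hP', hlen', hsup'⟩
    · -- both sides false
      constructor
      · intro h
        exfalso
        apply h
        rw [X_pow_eq_monomial, coeff_monomial_mul']
        rw [if_neg]
        intro hle
        have := hle i
        rw [Finsupp.single_apply, if_pos rfl, sum_single_apply, if_neg hi] at this
        omega
      · rintro ⟨b, W, hP, hlen, hsup⟩
        exfalso
        apply hi
        rw [← hsup, List.mem_toFinset]
        exact W.start_mem_support


/-- For `k ≥ 1` and a `k`-element vertex set `S`, the coefficient
in `p(G,k) = ∑ᵢ p_{k,i}` of the monomial with exponent `c` on each variable of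
`S` (and `0` elsewhere) is nonzero iff `G` contains a path on exactly the
vertices of `S`. -/
theorem coeff_pathPoly_ne_zero_iff_path {n : ℕ} (G : SimpleGraph (Fin n))
    [DecidableRel G.Adj] (c k : ℕ) (hc : 1 ≤ c) (hk : 1 ≤ k)
    (S : Finset (Fin n)) (hS : S.card = k) :
    MvPolynomial.coeff (∑ v ∈ S, Finsupp.single v c)
        (∑ i, pathPoly G c k i) ≠ 0 ↔
    ∃ (a b : Fin n) (W : G.Walk a b), W.IsPath ∧ W.length = k - 1 ∧
      W.support.toFinset = S := by
  rw [MvPolynomial.coeff_sum]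
  rw [show (∑ x : Fin n, MvPolynomial.coeff (∑ v ∈ S, Finsupp.single v c)
        (pathPoly G c k x) ≠ 0) ↔
      ∃ i : Fin n, MvPolynomial.coeff (∑ v ∈ S, Finsupp.single v c)
        (pathPoly G c k i) ≠ 0 by
    simp only [ne_eq, Finset.sum_eq_zero_iff, Finset.mem_univ, true_implies, not_forall]]
  constructor
  · rintro ⟨i, h⟩
    obtain ⟨b, W, hW⟩ := (key G c hc k hk i S hS).mp h
    exact ⟨i, b, W, hW⟩
  · rintro ⟨a, b, W, hW⟩
    exact ⟨a, (key G c hc k hk a S hS).mpr ⟨b, W, hW⟩⟩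
end

section
/- Let G be a simple graph on Fin n with n ≥ 1, let c ≥ 1 be an integer, and define polynomials in MvPolynomial (Fin n) ℕ by p₁ᵢ = (X i)^c and p_{k+1,i} = (X i)^c · ∑_{j ∈ G.neighborFinset i} p_{k,j}, and set p(G,n) = ∑_{i} p_{n,i}. Then the coefficient in p(G,n) of the monomial x₁^c ⋯ x_n^c (exponent c on every variable) is nonzero if and only if G has a Hamiltonian path, i.e., a path visiting every vertex of Fin n exactly once. -/
/-- Degree finsupp attached to a list of vertices: each entry contributes `c`. -/
noncomputable def wdeg {n : ℕ} (c : ℕ) (l : List (Fin n)) : Fin n →₀ ℕ :=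
  (l.map (fun u => Finsupp.single u c)).sum

lemma wdeg_nil {n : ℕ} (c : ℕ) : wdeg (n := n) c [] = 0 := rfl

lemma wdeg_cons {n : ℕ} (c : ℕ) (u : Fin n) (l : List (Fin n)) :
    wdeg c (u :: l) = Finsupp.single u c + wdeg c l := by
  simp [wdeg]

lemma wdeg_apply {n : ℕ} (c : ℕ) (l : List (Fin n)) (v : Fin n) :
    wdeg c l v = c * l.count v := by
  induction l with
  | nil => simp [wdeg]
  | cons u l ih =>
    rw [wdeg_cons]
    by_cases h : u = v
    · subst h
      simp [Finsupp.single_apply, List.count_cons, ih, Nat.mul_add]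
      exact Nat.add_comm _ _
    · simp [Finsupp.single_apply, List.count_cons, ih, Ne.symm h, h]

lemma walkMonomial_key {n : ℕ} (G : SimpleGraph (Fin n)) [DecidableRel G.Adj]
    (c : ℕ) : ∀ (k : ℕ) (i : Fin n),
    pathPoly G c (k + 1) i =
      ∑ v : Fin n, ∑ W ∈ G.finsetWalkLength k i v,
        MvPolynomial.monomial (wdeg c W.support) 1 := by
  intro k
  induction k with
  | zero =>
    intro i
    rw [Finset.sum_eq_single i]
    · have h1 : G.finsetWalkLength 0 i i = {SimpleGraph.Walk.nil} := by
        ext W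
        simp [SimpleGraph.mem_finsetWalkLength_iff,
          SimpleGraph.Walk.length_eq_zero_iff]
      rw [h1]
      simp [pathPoly, wdeg_cons, wdeg_nil, MvPolynomial.X_pow_eq_monomial]
    · intro v _ hvi
      apply Finset.sum_eq_zero
      intro W hW
      exact absurd (SimpleGraph.Walk.eq_of_length_eq_zero
        (SimpleGraph.mem_finsetWalkLength_iff.mp hW)).symm hvi
    · intro h; exact absurd (Finset.mem_univ i) h
  | succ k ih =>
    intro i
    show MvPolynomial.X i ^ c * ∑ j ∈ G.neighborFinset i, pathPoly G c (k + 1) j = _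
    -- rewrite RHS
    have hdisj : ∀ v : Fin n,
        ∑ W ∈ G.finsetWalkLength (k + 1) i v,
            MvPolynomial.monomial (wdeg c W.support) 1 =
        ∑ w : G.neighborSet i, ∑ W ∈ G.finsetWalkLength k w v,
            MvPolynomial.monomial (wdeg c (SimpleGraph.Walk.cons w.2 W).support) 1 := by
      intro v
      rw [show G.finsetWalkLength (k + 1) i v =
          Finset.univ.biUnion fun (w : G.neighborSet i) =>
            (G.finsetWalkLength k w v).map
              ⟨fun p => SimpleGraph.Walk.cons w.property p, fun _ _ h => by cases h; rfl⟩ from rfl]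
      rw [Finset.sum_biUnion]
      · apply Finset.sum_congr rfl
        intro w _
        rw [Finset.sum_map]
        rfl
      · intro w _ w' _ hww'
        simp only [Finset.disjoint_left, Finset.mem_map, Function.Embedding.coeFn_mk]
        rintro p ⟨q, _, rfl⟩ ⟨q', _, hq'⟩
        apply hww'
        injection hq' with h1 h2
        exact Subtype.ext h2.symm
    calc MvPolynomial.X i ^ c * ∑ j ∈ G.neighborFinset i, pathPoly G c (k + 1) j
        = ∑ j ∈ G.neighborFinset i, MvPolynomial.X i ^ c * pathPoly G c (k + 1) j := by
          rw [Finset.mul_sum]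
      _ = ∑ w : G.neighborSet i, MvPolynomial.X i ^ c * pathPoly G c (k + 1) w := by
          rw [Finset.sum_set_coe (s := G.neighborSet i)
            (f := fun j => MvPolynomial.X i ^ c * pathPoly G c (k + 1) j)]
          rfl
      _ = ∑ w : G.neighborSet i, ∑ v : Fin n, ∑ W ∈ G.finsetWalkLength k w v,
            MvPolynomial.monomial (wdeg c (SimpleGraph.Walk.cons w.2 W).support) 1 := by
          apply Finset.sum_congr rfl
          intro w _
          rw [ih, Finset.mul_sum]
          apply Finset.sum_congr rfl
          intro v _
          rw [Finset.mul_sum]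
          apply Finset.sum_congr rfl
          intro W _
          show MvPolynomial.X i ^ c * _ = MvPolynomial.monomial (wdeg c (i :: W.support)) 1
          rw [wdeg_cons,
            MvPolynomial.X_pow_eq_monomial, MvPolynomial.monomial_mul, one_mul]
      _ = ∑ v : Fin n, ∑ W ∈ G.finsetWalkLength (k + 1) i v,
            MvPolynomial.monomial (wdeg c W.support) 1 := by
          rw [Finset.sum_comm]
          exact Finset.sum_congr rfl fun v _ => (hdisj v).symm

/-- For `n ≥ 1`, the coefficient in `p(G,n) = ∑ᵢ p_{n,i}` of the
monomial `x₁^c ⋯ x_n^c` (exponent `c` on every variable) is nonzero iff `G` has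
a Hamiltonian path (a walk visiting every vertex exactly once). -/
theorem coeff_pathPoly_ne_zero_iff_hamiltonianPath {n : ℕ} (hn : 1 ≤ n)
    (G : SimpleGraph (Fin n)) [DecidableRel G.Adj] (c : ℕ) (hc : 1 ≤ c) :
    MvPolynomial.coeff (∑ v : Fin n, Finsupp.single v c)
        (∑ i, pathPoly G c n i) ≠ 0 ↔
    ∃ (a b : Fin n) (W : G.Walk a b), W.IsHamiltonian := by
  obtain ⟨k, rfl⟩ : ∃ k, n = k + 1 := ⟨n - 1, (Nat.succ_pred_eq_of_pos hn).symm⟩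
  set σ : Fin (k + 1) →₀ ℕ := ∑ v : Fin (k + 1), Finsupp.single v c with hσ
  have hσ_apply : ∀ v : Fin (k + 1), σ v = c := by
    intro v
    rw [hσ, Finset.sum_apply']
    simp [Finsupp.single_apply]
  have hwdeg_iff : ∀ (a b : Fin (k + 1)) (W : G.Walk a b),
      wdeg c W.support = σ ↔ W.IsHamiltonian := by
    intro a b W
    constructor
    · intro h v
      have := DFunLike.congr_fun h v
      simp only [wdeg_apply, hσ_apply] at this
      have : c * W.support.count v = c * 1 := by rw [this, mul_one]
      exact Nat.eq_of_mul_eq_mul_left hc this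
    · intro h
      ext v
      rw [wdeg_apply, hσ_apply, h v, mul_one]
  rw [Finset.sum_congr rfl fun i _ => walkMonomial_key G c k i]
  simp only [MvPolynomial.coeff_sum, MvPolynomial.coeff_monomial]
  rw [Ne]
  simp only [Finset.sum_eq_zero_iff, Finset.mem_univ, true_implies, ite_eq_right_iff,
    one_ne_zero, imp_false]
  push_neg
  constructor
  · rintro ⟨a, b, W, hW, h⟩
    exact ⟨a, b, W, (hwdeg_iff a b W).mp h⟩
  · rintro ⟨a, b, W, hW⟩
    refine ⟨a, b, W, ?_, (hwdeg_iff a b W).mpr hW⟩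
    rw [SimpleGraph.mem_finsetWalkLength_iff, hW.length_eq, Fintype.card_fin,
      Nat.add_sub_cancel]
end
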